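/- Let G₁, G₂ be graphs, S₁ ⊆ V₁, S₂ ⊆ V₂. If S₁ × S₂ is a defensive k-alliance free set in G₁ □ G₂ and S₂ is a defensive k'-alliance in G₂, then S₁ is a defensive (k − k')-alliance free set in G₁. -/
import Mathlib


open Classical

/-- Number of neighbors of `v` inside `S`. -/
noncomputable def dS {V : Type*} (G : SimpleGraph V) (S : Set V) (v : V) : ℕ :=
  {u ∈ S | G.Adj v u}.ncard

/-- `S` is a defensive `k`-alliance. -/
def IsDefAlliance {V : Type*} (G : SimpleGraph V) (k : ℤ) (S : Set V) : Prop :=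
  S.Nonempty ∧ ∀ v ∈ S, (dS G S v : ℤ) ≥ (dS G Sᶜ v : ℤ) + k

/-- `X` is a defensive `k`-alliance free set. -/
def IsDafFree {V : Type*} (G : SimpleGraph V) (k : ℤ) (X : Set V) : Prop :=
  ∀ S : Set V, S ⊆ X → ¬ IsDefAlliance G k S

/-- Boundary: vertices outside `S` with a neighbor in `S`. -/
def obdry {V : Type*} (G : SimpleGraph V) (S : Set V) : Set V :=
  {v | v ∉ S ∧ ∃ u ∈ S, G.Adj v u}

/-- `S` is an offensive `k`-alliance. -/
def IsOffAlliance {V : Type*} (G : SimpleGraph V) (k : ℤ) (S : Set V) : Prop :=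
  S.Nonempty ∧ ∀ v ∈ obdry G S, (dS G S v : ℤ) ≥ (dS G Sᶜ v : ℤ) + k

/-- `X` is an offensive `k`-alliance free set. -/
def IsOafFree {V : Type*} (G : SimpleGraph V) (k : ℤ) (X : Set V) : Prop :=
  ∀ S : Set V, S ⊆ X → ¬ IsOffAlliance G k S

/-- `S` is a powerful `k`-alliance. -/
def IsPowAlliance {V : Type*} (G : SimpleGraph V) (k : ℤ) (S : Set V) : Prop :=
  IsDefAlliance G k S ∧ IsOffAlliance G (k + 2) S

/-- `X` is a powerful `k`-alliance free set. -/
def IsPafFree {V : Type*} (G : SimpleGraph V) (k : ℤ) (X : Set V) : Prop :=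
  ∀ S : Set V, S ⊆ X → ¬ IsPowAlliance G k S

/-- Maximum cardinality of a defensive `k`-alliance free set. -/
noncomputable def phiD {V : Type*} (G : SimpleGraph V) (k : ℤ) : ℕ :=
  sSup {n : ℕ | ∃ X : Set V, IsDafFree G k X ∧ X.ncard = n}

/-- Maximum cardinality of an offensive `k`-alliance free set. -/
noncomputable def phiO {V : Type*} (G : SimpleGraph V) (k : ℤ) : ℕ :=
  sSup {n : ℕ | ∃ X : Set V, IsOafFree G k X ∧ X.ncard = n}

/-- Maximum cardinality of a powerful `k`-alliance free set. -/
noncomputable def phiP {V : Type*} (G : SimpleGraph V) (k : ℤ) : ℕ :=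
  sSup {n : ℕ | ∃ X : Set V, IsPafFree G k X ∧ X.ncard = n}

lemma dS_univ {V : Type*} (G : SimpleGraph V) (v : V) :
    dS G Set.univ v = (G.neighborSet v).ncard := by
  unfold dS
  congr 1
  ext u
  simp [SimpleGraph.mem_neighborSet]

lemma dS_add_compl {V : Type*} [Fintype V] (G : SimpleGraph V) (X : Set V) (v : V) :
    dS G X v + dS G Xᶜ v = (G.neighborSet v).ncard := by
  classical
  unfold dS
  rw [← Set.ncard_union_eq (by
        rw [Set.disjoint_left]
        rintro u ⟨hu, -⟩ ⟨hu', -⟩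
        exact hu' hu) (Set.toFinite _) (Set.toFinite _)]
  congr 1
  ext u
  simp only [Set.mem_union, Set.mem_setOf_eq, Set.mem_compl_iff, SimpleGraph.mem_neighborSet]
  tauto

lemma dS_boxProd {V₁ V₂ : Type*} [Fintype V₁] [Fintype V₂]
    (G₁ : SimpleGraph V₁) (G₂ : SimpleGraph V₂)
    (T₁ : Set V₁) (T₂ : Set V₂) (a : V₁) (b : V₂) (ha : a ∈ T₁) (hb : b ∈ T₂) :
    dS (G₁.boxProd G₂) (T₁ ×ˢ T₂) (a, b) = dS G₁ T₁ a + dS G₂ T₂ b := by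
  classical
  unfold dS
  have hset : {u ∈ T₁ ×ˢ T₂ | (G₁.boxProd G₂).Adj (a, b) u} =
      ((fun c => (c, b)) '' {u ∈ T₁ | G₁.Adj a u}) ∪
      ((fun d => (a, d)) '' {u ∈ T₂ | G₂.Adj b u}) := by
    ext ⟨c, d⟩
    simp only [Set.mem_setOf_eq, Set.mem_prod, SimpleGraph.boxProd_adj, Set.mem_union,
      Set.mem_image, Prod.mk.injEq]
    constructor
    · rintro ⟨⟨hc, hd⟩, (⟨hadj, rfl⟩ | ⟨hadj, rfl⟩)⟩
      · exact Or.inl ⟨c, ⟨hc, hadj⟩, rfl, rfl⟩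
      · exact Or.inr ⟨d, ⟨hd, hadj⟩, rfl, rfl⟩
    · rintro (⟨x, ⟨hx, hadj⟩, rfl, rfl⟩ | ⟨x, ⟨hx, hadj⟩, rfl, rfl⟩)
      · exact ⟨⟨hx, hb⟩, Or.inl ⟨hadj, rfl⟩⟩
      · exact ⟨⟨ha, hx⟩, Or.inr ⟨hadj, rfl⟩⟩
  rw [hset, Set.ncard_union_eq (by
      rw [Set.disjoint_left]
      rintro ⟨c, d⟩ ⟨x, ⟨-, hadj⟩, hx⟩ ⟨y, ⟨-, -⟩, hy⟩
      have h1 : c = a := by cases hy; rfl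
      have h2 : x = a := by cases hx; exact h1
      exact G₁.irrefl (h2 ▸ hadj)) ((Set.toFinite _).image _) ((Set.toFinite _).image _),
    Set.ncard_image_of_injective _ (fun x y hxy => (Prod.mk.injEq _ _ _ _ ▸ hxy).1),
    Set.ncard_image_of_injective _ (fun x y hxy => (Prod.mk.injEq _ _ _ _ ▸ hxy).2)]

lemma nbr_boxProd {V₁ V₂ : Type*} [Fintype V₁] [Fintype V₂]
    (G₁ : SimpleGraph V₁) (G₂ : SimpleGraph V₂) (a : V₁) (b : V₂) :
    ((G₁.boxProd G₂).neighborSet (a, b)).ncard =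
      (G₁.neighborSet a).ncard + (G₂.neighborSet b).ncard := by
  rw [← dS_univ, ← dS_univ, ← dS_univ, ← dS_boxProd G₁ G₂ Set.univ Set.univ a b trivial trivial,
    Set.univ_prod_univ]

theorem stmt10 {V₁ V₂ : Type*} [Fintype V₁] [Fintype V₂]
    (G₁ : SimpleGraph V₁) (G₂ : SimpleGraph V₂)
    (k k' : ℤ) (S₁ : Set V₁) (S₂ : Set V₂)
    (h : IsDafFree (G₁.boxProd G₂) k (S₁ ×ˢ S₂))
    (hS₂ : IsDefAlliance G₂ k' S₂) :
    IsDafFree G₁ (k - k') S₁ := by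
  intro S hS ⟨hne, hall⟩
  apply h (S ×ˢ S₂) (Set.prod_mono hS le_rfl)
  refine ⟨hne.prod hS₂.1, ?_⟩
  rintro ⟨a, b⟩ ⟨ha, hb⟩
  have h1 := hall a ha
  have h2 := hS₂.2 b hb
  have e1 : (dS G₁ S a : ℤ) + dS G₁ Sᶜ a = (G₁.neighborSet a).ncard := by
    exact_mod_cast dS_add_compl G₁ S a
  have e2 : (dS G₂ S₂ b : ℤ) + dS G₂ S₂ᶜ b = (G₂.neighborSet b).ncard := by
    exact_mod_cast dS_add_compl G₂ S₂ b
  have e3 : (dS (G₁.boxProd G₂) (S ×ˢ S₂) (a, b) : ℤ) +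
      dS (G₁.boxProd G₂) (S ×ˢ S₂)ᶜ (a, b) =
      ((G₁.boxProd G₂).neighborSet (a, b)).ncard := by
    exact_mod_cast dS_add_compl (G₁.boxProd G₂) (S ×ˢ S₂) (a, b)
  have enbr : (((G₁.boxProd G₂).neighborSet (a, b)).ncard : ℤ) =
      (G₁.neighborSet a).ncard + (G₂.neighborSet b).ncard := by
    exact_mod_cast nbr_boxProd G₁ G₂ a b
  have eprod : (dS (G₁.boxProd G₂) (S ×ˢ S₂) (a, b) : ℤ) = dS G₁ S a + dS G₂ S₂ b := by
    exact_mod_cast dS_boxProd G₁ G₂ S S₂ a b ha hb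
  rw [ge_iff_le]
  linarith
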